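/- Let G be a subgroup of SL(2,ℂ) and let H be a 2×2 Hermitian matrix with det H ≠ 0 that is indefinite (H has one positive and one negative eigenvalue), such that gᴴ H g = H for every g ∈ G. Then there exists an invertible 2×2 complex matrix T such that for every g ∈ G all entries of T⁻¹ g T are real; i.e., G is conjugate to a subgroup of SL(2,ℝ). -/

import Mathlib

open Matrix Complex

/-- A matrix in `SL(2,ℂ)` preserving the Hermitian form `!![0, I; -I, 0]` has real entries. -/
theorem real_of_preserves_K (M : Matrix (Fin 2) (Fin 2) ℂ) (hdet : M.det = 1)
    (hK : Mᴴ * !![0,I;-I,0] * M = !![0,I;-I,0]) : ∀ i j, (M i j).im = 0 := by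
  have e00 := congrFun (congrFun hK 0) 0
  have e01 := congrFun (congrFun hK 0) 1
  have e10 := congrFun (congrFun hK 1) 0
  have e11 := congrFun (congrFun hK 1) 1
  simp [Matrix.mul_apply, Fin.sum_univ_two, Matrix.conjTranspose_apply] at e00 e01 e10 e11
  rw [Matrix.det_fin_two] at hdet
  set α := M 0 0; set β := M 0 1; set γ := M 1 0; set δ := M 1 1
  have f1 : (starRingEnd ℂ) α * γ = (starRingEnd ℂ) γ * α := by
    linear_combination (-I) * e00 +
      ((starRingEnd ℂ) α * γ - (starRingEnd ℂ) γ * α) * Complex.I_mul_I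
  have f2 : (starRingEnd ℂ) α * δ - (starRingEnd ℂ) γ * β = 1 := by
    linear_combination (-I) * e01 +
      ((starRingEnd ℂ) α * δ - (starRingEnd ℂ) γ * β - 1) * Complex.I_mul_I
  have f3 : (starRingEnd ℂ) β * γ - (starRingEnd ℂ) δ * α = -1 := by
    linear_combination (-I) * e10 +
      ((starRingEnd ℂ) β * γ - (starRingEnd ℂ) δ * α + 1) * Complex.I_mul_I
  have f4 : (starRingEnd ℂ) β * δ = (starRingEnd ℂ) δ * β := by
    linear_combination (-I) * e11 +
      ((starRingEnd ℂ) β * δ - (starRingEnd ℂ) δ * β) * Complex.I_mul_I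
  have hα : (starRingEnd ℂ) α = α := by
    linear_combination (-(starRingEnd ℂ) α) * hdet + α * f2 - β * f1
  have hβ : (starRingEnd ℂ) β = β := by
    linear_combination α * f4 + (-β) * f3 + (-(starRingEnd ℂ) β) * hdet
  have hγ : (starRingEnd ℂ) γ = γ := by
    linear_combination (-(starRingEnd ℂ) γ) * hdet + (-δ) * f1 + γ * f2
  have hδ : (starRingEnd ℂ) δ = δ := by
    linear_combination (-δ) * f3 + γ * f4 + (-(starRingEnd ℂ) δ) * hdet
  intro i j
  fin_cases i <;> fin_cases j <;>
    simp only [← Complex.conj_eq_iff_im] <;> assumption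

/-- An indefinite nondegenerate Hermitian form on `ℂ²` is, up to a nonzero real scalar,
congruent to `!![0, I; -I, 0]`. -/
theorem exists_congruent_to_K (H : Matrix (Fin 2) (Fin 2) ℂ) (hH : H.IsHermitian)
    (hdet : H.det ≠ 0)
    (hind : ∃ i j : Fin 2, 0 < hH.eigenvalues i ∧ hH.eigenvalues j < 0) :
    ∃ (T : Matrix (Fin 2) (Fin 2) ℂ) (c : ℝ), c ≠ 0 ∧ T.det ≠ 0 ∧
      Tᴴ * H * T = (c : ℂ) • !![0,I;-I,0] := by
  obtain ⟨i, j, hpi, hnj⟩ := hind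
  have hij : i ≠ j := fun h => by rw [h] at hpi; linarith
  set lam := hH.eigenvalues with hlam
  have hprod : lam 0 * lam 1 < 0 := by
    have h2 : ∀ k : Fin 2, k = 0 ∨ k = 1 := by decide
    rcases h2 i with hi | hi <;> rcases h2 j with hj | hj <;> subst hi <;> subst hj <;>
      first
        | exact absurd rfl hij
        | nlinarith
  have hl0 : lam 0 ≠ 0 := fun h => by rw [h] at hprod; simp at hprod
  have hl1 : lam 1 ≠ 0 := fun h => by rw [h] at hprod; simp at hprod
  set s : Fin 2 → ℝ := fun k => (Real.sqrt |lam k|)⁻¹ with hsdef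
  have hs : ∀ k, lam k ≠ 0 → s k * lam k * s k = (if 0 < lam k then 1 else -1) := by
    intro k hk
    by_cases h0 : 0 < lam k
    · rw [if_pos h0, hsdef]
      simp only [abs_of_pos h0]
      rw [show (Real.sqrt (lam k))⁻¹ * lam k * (Real.sqrt (lam k))⁻¹
          = lam k / (Real.sqrt (lam k) * Real.sqrt (lam k)) by ring,
        Real.mul_self_sqrt h0.le, div_self hk]
    · have hneg : lam k < 0 := lt_of_le_of_ne (not_lt.mp h0) hk
      rw [if_neg h0, hsdef]
      simp only [abs_of_neg hneg]
      rw [show (Real.sqrt (-lam k))⁻¹ * lam k * (Real.sqrt (-lam k))⁻¹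
          = lam k / (Real.sqrt (-lam k) * Real.sqrt (-lam k)) by ring,
        Real.mul_self_sqrt (by linarith)]
      field_simp
  set ε : ℝ := if 0 < lam 0 then 1 else -1 with hεdef
  have hε0 : ε ≠ 0 := by rw [hεdef]; split <;> norm_num
  have hs0 : s 0 * lam 0 * s 0 = ε := by rw [hs 0 hl0]
  have hs1 : s 1 * lam 1 * s 1 = -ε := by
    rw [hs 1 hl1, hεdef]
    by_cases h0 : 0 < lam 0
    · rw [if_pos h0, if_neg (by nlinarith)]
    · have h0' : lam 0 < 0 := lt_of_le_of_ne (not_lt.mp h0) hl0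
      rw [if_neg h0, if_pos (by nlinarith)]; norm_num
  set U : Matrix (Fin 2) (Fin 2) ℂ := (hH.eigenvectorUnitary : Matrix (Fin 2) (Fin 2) ℂ) with hUdef
  have hU : star U * H * U = diagonal (RCLike.ofReal ∘ lam) := by
    have := hH.conjStarAlgAut_star_eigenvectorUnitary
    rwa [Unitary.conjStarAlgAut_star_apply] at this
  set S : Matrix (Fin 2) (Fin 2) ℂ := diagonal (fun k => ((s k : ℝ) : ℂ)) with hSdef
  have hSH : Sᴴ = S := by
    rw [hSdef, Matrix.diagonal_conjTranspose]
    congr 1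
    funext k
    simp [Pi.star_def, Complex.star_def, Complex.conj_ofReal]
  set E : Matrix (Fin 2) (Fin 2) ℂ := !![(1:ℂ),0;0,-1] with hEdef
  have hSDS : S * diagonal (RCLike.ofReal ∘ lam) * S = (ε:ℂ) • E := by
    rw [hSdef, Matrix.diagonal_mul_diagonal, Matrix.diagonal_mul_diagonal]
    ext a b
    fin_cases a <;> fin_cases b <;>
      simp [Matrix.diagonal, hEdef] <;> norm_cast
  set P : Matrix (Fin 2) (Fin 2) ℂ := !![(1:ℂ), I; 1, -I] with hPdef
  have hPEP : Pᴴ * E * P = (2:ℂ) • !![(0:ℂ),I;-I,0] := by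
    rw [hPdef, hEdef]
    ext a b
    fin_cases a <;> fin_cases b <;>
      simp [Matrix.mul_apply, Fin.sum_univ_two, Matrix.conjTranspose_apply] <;> ring
  refine ⟨U * S * P, 2 * ε, by positivity, ?_, ?_⟩
  · rw [Matrix.det_mul, Matrix.det_mul]
    have hdU : U.det ≠ 0 := by
      have hUU : U * star U = 1 := Matrix.mem_unitaryGroup_iff.mp hH.eigenvectorUnitary.2
      have := congrArg Matrix.det hUU
      rw [Matrix.det_mul, Matrix.det_one] at this
      exact left_ne_zero_of_mul_eq_one this
    have hdS : S.det ≠ 0 := by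
      rw [hSdef, Matrix.det_diagonal, Fin.prod_univ_two]
      have h0 : s 0 ≠ 0 := by
        rw [hsdef]; simp
        positivity
      have h1 : s 1 ≠ 0 := by
        rw [hsdef]; simp
        positivity
      simp [h0, h1]
    have hdP : P.det ≠ 0 := by
      rw [hPdef, Matrix.det_fin_two_of]
      norm_num [Complex.ext_iff]
    exact mul_ne_zero (mul_ne_zero hdU hdS) hdP
  · have expand : (U * S * P)ᴴ * H * (U * S * P)
        = Pᴴ * (S * (star U * H * U) * S) * P := by
      rw [Matrix.star_eq_conjTranspose]
      simp only [Matrix.conjTranspose_mul, hSH]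
      simp only [Matrix.mul_assoc]
    rw [expand, hU, hSDS]
    rw [Matrix.mul_smul, Matrix.smul_mul, hPEP, smul_smul]
    congr 1
    push_cast
    ring

/-- A subgroup of `SL(2,ℂ)` preserving a nondegenerate *indefinite* Hermitian form (one
positive and one negative eigenvalue) is conjugate to a subgroup of `SL(2,ℝ)`. -/
theorem conj_to_SL2R_of_indefinite (G : Subgroup (Matrix.SpecialLinearGroup (Fin 2) ℂ))
    (H : Matrix (Fin 2) (Fin 2) ℂ) (hH : H.IsHermitian) (hdet : H.det ≠ 0)
    (hind : ∃ i j : Fin 2, 0 < hH.eigenvalues i ∧ hH.eigenvalues j < 0)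
    (hpres : ∀ g ∈ G, (g : Matrix (Fin 2) (Fin 2) ℂ)ᴴ * H * (g : Matrix (Fin 2) (Fin 2) ℂ) = H) :
    ∃ T : Matrix (Fin 2) (Fin 2) ℂ, IsUnit T.det ∧
      ∀ g ∈ G, ∀ i j, ((T⁻¹ * (g : Matrix (Fin 2) (Fin 2) ℂ) * T) i j).im = 0 := by
  obtain ⟨T, c, hc, hdT, hTHT⟩ := exists_congruent_to_K H hH hdet hind
  refine ⟨T, isUnit_iff_ne_zero.mpr hdT, ?_⟩
  intro g hg i j
  set M : Matrix (Fin 2) (Fin 2) ℂ := T⁻¹ * (g : Matrix (Fin 2) (Fin 2) ℂ) * T with hMdef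
  have hTT : T * T⁻¹ = 1 := Matrix.mul_nonsing_inv T (isUnit_iff_ne_zero.mpr hdT)
  have hTM : T * M = (g : Matrix (Fin 2) (Fin 2) ℂ) * T := by
    rw [hMdef]
    simp only [← Matrix.mul_assoc, hTT, Matrix.one_mul]
  have hgdet : (g : Matrix (Fin 2) (Fin 2) ℂ).det = 1 := g.prop
  have hdetM : M.det = 1 := by
    rw [hMdef, Matrix.det_mul, Matrix.det_mul, Matrix.det_nonsing_inv, hgdet]
    field_simp
    exact Ring.inverse_mul_cancel _ (isUnit_iff_ne_zero.mpr hdT)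
  have h1 : Mᴴ * (Tᴴ * H * T) * M = Tᴴ * H * T := by
    calc Mᴴ * (Tᴴ * H * T) * M = (T * M)ᴴ * H * (T * M) := by
          simp only [Matrix.conjTranspose_mul, Matrix.mul_assoc]
      _ = ((g : Matrix (Fin 2) (Fin 2) ℂ) * T)ᴴ * H * ((g : Matrix (Fin 2) (Fin 2) ℂ) * T) := by
          rw [hTM]
      _ = Tᴴ * ((g : Matrix (Fin 2) (Fin 2) ℂ)ᴴ * H * (g : Matrix (Fin 2) (Fin 2) ℂ)) * T := by
          simp only [Matrix.conjTranspose_mul, Matrix.mul_assoc]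
      _ = Tᴴ * H * T := by rw [hpres g hg, Matrix.mul_assoc]
  rw [hTHT] at h1
  rw [Matrix.mul_smul, Matrix.smul_mul] at h1
  have hKM : Mᴴ * !![0,I;-I,0] * M = !![0,I;-I,0] := by
    have hcne : (c : ℂ) ≠ 0 := by exact_mod_cast hc
    exact smul_right_injective _ hcne h1
  exact real_of_preserves_K M hdetM hKM i j
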